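/- Let J be an invertible k×k real matrix, assume f₁,…,f_k are linearly independent, and define H_p := Σ_{q=1}^k J_{pq} · f_q for p ∈ {1,…,k}. Then the standard control vector field built from (H₁,…,H_k, g) equals (det J)² times the standard control vector field built from (f₁,…,f_k, g): v₀^{(H₁,…,H_k)} = (det J)² · v₀^{(f₁,…,f_k)}. -/
import Mathlib


open scoped RealInnerProductSpace

/-- The matrix `Σ^{(a₁,…,a_r)}_{(b₁,…,b_s)}` whose `(p,q)` entry is `⟪b_q, a_p⟫`. -/
noncomputable def sigmaMat {V : Type*} [NormedAddCommGroup V] [InnerProductSpace ℝ V]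
    {r s : ℕ} (a : Fin r → V) (b : Fin s → V) : Matrix (Fin r) (Fin s) ℝ :=
  Matrix.of fun p q => ⟪b q, a p⟫

/-- The standard control vector field built from the `k+1` vectors `f₀,…,f_k`
and the vector `g`. -/
noncomputable def v0 {V : Type*} [NormedAddCommGroup V] [InnerProductSpace ℝ V]
    {k : ℕ} (f : Fin (k+1) → V) (g : V) : V :=
  (∑ i : Fin (k+1),
    ((-1 : ℝ) ^ ((i : ℕ) + k + 1) *
      (sigmaMat f (Fin.snoc (fun j => f (i.succAbove j)) g)).det) • f i)
  + (sigmaMat f f).det • g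

lemma sigmaMat_mul {V : Type*} [NormedAddCommGroup V] [InnerProductSpace ℝ V]
    {n : ℕ} (B : Matrix (Fin n) (Fin n) ℝ) (a b : Fin n → V) :
    sigmaMat (fun p => ∑ q, B p q • a q) (fun p => ∑ q, B p q • b q)
      = B * sigmaMat a b * B.transpose := by
  ext p q
  simp only [sigmaMat, Matrix.mul_apply, Matrix.of_apply, Matrix.transpose_apply,
    sum_inner, inner_sum, real_inner_smul_left, real_inner_smul_right, Finset.mul_sum,
    Finset.sum_mul]
  rw [Finset.sum_comm]
  refine Finset.sum_congr rfl fun i _ => Finset.sum_congr rfl fun j _ => by ring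

lemma inner_v0 {V : Type*} [NormedAddCommGroup V] [InnerProductSpace ℝ V]
    {k : ℕ} (f : Fin (k+1) → V) (g x : V) :
    ⟪x, v0 f g⟫ = (sigmaMat (Fin.snoc f x) (Fin.snoc f g)).det := by
  rw [Matrix.det_succ_row _ (Fin.last (k+1)), Fin.sum_univ_castSucc]
  have hrow : ∀ j : Fin (k+2), (sigmaMat (Fin.snoc f x) (Fin.snoc f g)).submatrix
      (Fin.last (k+1)).succAbove j.succAbove
      = sigmaMat f (fun q => (Fin.snoc f g : Fin (k+2) → V) (j.succAbove q)) := by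
    intro j
    ext p q
    simp [sigmaMat, Fin.succAbove_last, Fin.snoc_castSucc]
  have hcol : ∀ i : Fin (k+1), (fun q => (Fin.snoc f g : Fin (k+2) → V) ((i.castSucc).succAbove q))
      = (Fin.snoc (fun j => f (i.succAbove j)) g : Fin (k+1) → V) := by
    intro i
    funext q
    refine Fin.lastCases ?_ (fun j => ?_) q
    · have : (i.castSucc).succAbove (Fin.last k) = Fin.last (k+1) := by
        simp [Fin.succAbove, Fin.lt_def]; omega
      simp [this]
    · rw [Fin.castSucc_succAbove_castSucc]
      simp
  have hlast : (fun q => (Fin.snoc f g : Fin (k+2) → V) ((Fin.last (k+1)).succAbove q)) = f := by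
    funext q; simp [Fin.succAbove_last]
  simp only [hrow, hcol, hlast]
  simp only [v0, inner_add_right, inner_sum, real_inner_smul_right, sigmaMat,
    Matrix.of_apply, Fin.snoc_last, Fin.snoc_castSucc, Fin.val_last, Fin.coe_castSucc]
  rw [real_inner_comm x g]
  congr 1
  · refine Finset.sum_congr rfl fun i _ => ?_
    rw [real_inner_comm x (f i)]
    have hsgn : ((-1:ℝ)) ^ ((i:ℕ) + k + 1) = ((-1:ℝ)) ^ ((k + 1) + (i:ℕ)) := by
      congr 1; omega
    rw [hsgn]
    ring
  · rw [show ((-1:ℝ))^((k+1)+(k+1)) = 1 from Even.neg_one_pow ⟨k+1, by ring⟩]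
    ring

theorem stmt_14 {V : Type*} [NormedAddCommGroup V] [InnerProductSpace ℝ V]
    [FiniteDimensional ℝ V] (k : ℕ) (f : Fin (k+1) → V) (g : V)
    (hf : LinearIndependent ℝ f)
    (J : Matrix (Fin (k+1)) (Fin (k+1)) ℝ) (hJ : IsUnit J.det)
    (H : Fin (k+1) → V) (hH : ∀ p, H p = ∑ q : Fin (k+1), J p q • f q) :
    v0 H g = (J.det) ^ 2 • v0 f g := by
  set B : Matrix (Fin (k+2)) (Fin (k+2)) ℝ :=
    Matrix.of (Fin.snoc (fun p => Fin.snoc (J p) 0) (Fin.snoc 0 1)) with hB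
  have hBdet : B.det = J.det := by
    rw [Matrix.det_succ_row _ (Fin.last (k+1)), Fin.sum_univ_castSucc]
    simp only [hB, Matrix.of_apply, Fin.snoc_last, Fin.snoc_castSucc, Pi.zero_apply,
      mul_zero, zero_mul, Finset.sum_const_zero, zero_add]
    have : B.submatrix (Fin.last (k+1)).succAbove (Fin.last (k+1)).succAbove = J := by
      ext p q
      simp [hB, Fin.succAbove_last]
    rw [Fin.succAbove_last] at this ⊢
    rw [this]
    simp only [Fin.val_last]
    rw [show ((-1:ℝ))^(k+1+(k+1)) = 1 from Even.neg_one_pow ⟨k+1, by ring⟩]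
    ring
  refine ext_inner_left ℝ fun x => ?_
  have hsnoc : ∀ y : V, (Fin.snoc H y : Fin (k+2) → V) = fun p => ∑ q, B p q • (Fin.snoc f y : Fin (k+2) → V) q := by
    intro y
    funext p
    refine Fin.lastCases ?_ (fun i => ?_) p
    · simp only [hB, Matrix.of_apply, Fin.snoc_last]
      rw [Fin.sum_univ_castSucc]
      simp
    · simp only [hB, Matrix.of_apply, Fin.snoc_castSucc]
      rw [Fin.sum_univ_castSucc, hH]
      simp
  rw [inner_v0, real_inner_smul_right, inner_v0, hsnoc x, hsnoc g, sigmaMat_mul,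
    Matrix.det_mul, Matrix.det_mul, Matrix.det_transpose, hBdet]
  ring
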